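/- Let T be a finite tree with at least two vertices. If D_pr is the unique minimum paired-dominating set of T, then T has a unique minimum ev-dominating set M; moreover, M is the unique perfect matching of the induced subgraph T[D_pr] and V_T(M) = D_pr. -/

import Mathlib

set_option linter.unusedSectionVars false

open SimpleGraph

variable {V : Type*}

/-- `D` is a dominating set of `G`: every vertex outside `D` has a neighbor in `D`. -/
def IsDomSet (G : SimpleGraph V) (D : Set V) : Prop :=
  ∀ v ∉ D, ∃ u ∈ D, G.Adj u v

/-- The edge `e` ev-dominates the vertex `v`: `e` is incident to `v` or to a neighbor of `v`. -/
def EvDom (G : SimpleGraph V) (e : Sym2 V) (v : V) : Prop :=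
  v ∈ e ∨ ∃ u ∈ e, G.Adj u v

/-- `M` is an edge-vertex dominating set of `G`. -/
def IsEvDomSet (G : SimpleGraph V) (M : Set (Sym2 V)) : Prop :=
  M ⊆ G.edgeSet ∧ ∀ v : V, ∃ e ∈ M, EvDom G e v

/-- `M` is a minimum edge-vertex dominating set of `G`. -/
def IsMinEvDomSet (G : SimpleGraph V) (M : Set (Sym2 V)) : Prop :=
  IsEvDomSet G M ∧ ∀ M' : Set (Sym2 V), IsEvDomSet G M' → M.ncard ≤ M'.ncard

/-- The edge-vertex domination number `γ_ev(G)`. -/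
noncomputable def evNum (G : SimpleGraph V) : ℕ :=
  sInf {n | ∃ M : Set (Sym2 V), IsEvDomSet G M ∧ M.ncard = n}

/-- The set of all endpoints of edges in `M`. -/
def edgeVerts (M : Set (Sym2 V)) : Set V := {v | ∃ e ∈ M, v ∈ e}

/-- `M` is a perfect matching of the induced subgraph `G[D]`: a set of edges of `G`
with all endpoints in `D`, such that every vertex of `D` lies in exactly one edge of `M`. -/
def IsPMOn (G : SimpleGraph V) (D : Set V) (M : Set (Sym2 V)) : Prop :=
  M ⊆ G.edgeSet ∧ (∀ e ∈ M, ∀ v ∈ e, v ∈ D) ∧ ∀ v ∈ D, ∃! e, e ∈ M ∧ v ∈ e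

/-- `D` is a paired-dominating set of `G`. -/
def IsPairedDomSet (G : SimpleGraph V) (D : Set V) : Prop :=
  IsDomSet G D ∧ ∃ M : Set (Sym2 V), IsPMOn G D M

/-- `D` is a minimum paired-dominating set of `G`. -/
def IsMinPairedDomSet (G : SimpleGraph V) (D : Set V) : Prop :=
  IsPairedDomSet G D ∧ ∀ D' : Set V, IsPairedDomSet G D' → D.ncard ≤ D'.ncard

/-- The paired-domination number `γ_pr(G)`. -/
noncomputable def prNum (G : SimpleGraph V) : ℕ :=
  sInf {n | ∃ D : Set V, IsPairedDomSet G D ∧ D.ncard = n}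

/-- No two distinct edges of `M` share a vertex. -/
def NoSharedVertex (M : Set (Sym2 V)) : Prop :=
  ∀ e ∈ M, ∀ f ∈ M, e ≠ f → ∀ v : V, v ∈ e → v ∉ f

/-- `G` has no isolated vertex. -/
def NoIsolated (G : SimpleGraph V) : Prop := ∀ v : V, ∃ u, G.Adj u v



section TreeAux

variable {G : SimpleGraph V}

/-- every vertex on a geodesic other than the endpoint is strictly closer -/
lemma dist_lt_of_mem_support {r u z : V} (p : G.Walk r u) (hp : p.length = G.dist r u)
    (hz : z ∈ p.support) (hzu : z ≠ u) : G.dist r z < G.dist r u := by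
  classical
  have hspec := p.take_spec hz
  have hlen : (p.takeUntil z hz).length + (p.dropUntil z hz).length = p.length := by
    rw [← SimpleGraph.Walk.length_append, hspec]
  have hdrop : (p.dropUntil z hz).length ≠ 0 := fun h =>
    hzu (SimpleGraph.Walk.eq_of_length_eq_zero h)
  have h1 : G.dist r z ≤ (p.takeUntil z hz).length := SimpleGraph.dist_le _
  omega

lemma exists_geodesic (hT : G.IsTree) (r u : V) :
    ∃ p : G.Walk r u, p.IsPath ∧ p.length = G.dist r u := by
  classical
  obtain ⟨q, hq⟩ := (hT.isConnected.preconnected r u).exists_walk_length_eq_dist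
  refine ⟨q.bypass, q.bypass_isPath, le_antisymm ?_ (SimpleGraph.dist_le _)⟩
  calc q.bypass.length ≤ q.length := q.length_bypass_le
  _ = G.dist r u := hq

lemma dist_le_succ_of_adj (hT : G.IsTree) (r : V) {u v : V} (h : G.Adj u v) :
    G.dist r v ≤ G.dist r u + 1 := by
  obtain ⟨p, _, hlen⟩ := exists_geodesic hT r u
  have := SimpleGraph.dist_le (p.concat h)
  rwa [SimpleGraph.Walk.length_concat, hlen] at this

lemma adj_dist_ne (hT : G.IsTree) (r : V) {u v : V} (h : G.Adj u v) :
    G.dist r u ≠ G.dist r v := by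
  classical
  intro heq
  obtain ⟨p, hp, hlen⟩ := exists_geodesic hT r u
  obtain ⟨q, hq, hqlen⟩ := exists_geodesic hT r v
  have hvns : v ∉ p.support := by
    intro hv
    have := dist_lt_of_mem_support p hlen hv h.ne'
    omega
  have hpath : (p.concat h).IsPath := by
    rw [← SimpleGraph.Walk.isPath_reverse_iff, SimpleGraph.Walk.reverse_concat,
      SimpleGraph.Walk.cons_isPath_iff]
    exact ⟨hp.reverse, by rwa [SimpleGraph.Walk.support_reverse, List.mem_reverse]⟩
  have huniq := (SimpleGraph.isAcyclic_iff_path_unique.mp hT.IsAcyclic)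
    (⟨p.concat h, hpath⟩ : G.Path r v) ⟨q, hq⟩
  have := congrArg (fun (P : G.Path r v) => P.1.length) huniq
  simp only [SimpleGraph.Walk.length_concat] at this
  omega

/-- adjacent vertices differ in distance-to-root by exactly one -/
lemma adj_dist_cases (hT : G.IsTree) (r : V) {u v : V} (h : G.Adj u v) :
    G.dist r v = G.dist r u + 1 ∨ G.dist r u = G.dist r v + 1 := by
  have h1 := dist_le_succ_of_adj hT r h
  have h2 := dist_le_succ_of_adj hT r h.symm
  have h3 := adj_dist_ne hT r h
  omega

/-- uniqueness of the parent: at most one neighbour is closer to the root -/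
lemma parent_unique (hT : G.IsTree) (r : V) {v c₁ c₂ : V} (h1 : G.Adj c₁ v) (h2 : G.Adj c₂ v)
    (hd1 : G.dist r c₁ + 1 = G.dist r v) (hd2 : G.dist r c₂ + 1 = G.dist r v) : c₁ = c₂ := by
  classical
  obtain ⟨p1, hp1, hl1⟩ := exists_geodesic hT r c₁
  obtain ⟨p2, hp2, hl2⟩ := exists_geodesic hT r c₂
  have hvns1 : v ∉ p1.support := by
    intro hv
    rcases eq_or_ne v c₁ with rfl | hne
    · omega
    · have := dist_lt_of_mem_support p1 hl1 hv hne; omega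
  have hvns2 : v ∉ p2.support := by
    intro hv
    rcases eq_or_ne v c₂ with rfl | hne
    · omega
    · have := dist_lt_of_mem_support p2 hl2 hv hne; omega
  have hpath1 : (p1.concat h1).IsPath := by
    rw [← SimpleGraph.Walk.isPath_reverse_iff, SimpleGraph.Walk.reverse_concat,
      SimpleGraph.Walk.cons_isPath_iff]
    exact ⟨hp1.reverse, by rwa [SimpleGraph.Walk.support_reverse, List.mem_reverse]⟩
  have hpath2 : (p2.concat h2).IsPath := by
    rw [← SimpleGraph.Walk.isPath_reverse_iff, SimpleGraph.Walk.reverse_concat,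
      SimpleGraph.Walk.cons_isPath_iff]
    exact ⟨hp2.reverse, by rwa [SimpleGraph.Walk.support_reverse, List.mem_reverse]⟩
  have huniq := (SimpleGraph.isAcyclic_iff_path_unique.mp hT.IsAcyclic)
    (⟨p1.concat h1, hpath1⟩ : G.Path r v) ⟨p2.concat h2, hpath2⟩
  have hw : (p1.concat h1) = (p2.concat h2) := congrArg Subtype.val huniq
  have hrev := congrArg SimpleGraph.Walk.reverse hw
  rw [SimpleGraph.Walk.reverse_concat, SimpleGraph.Walk.reverse_concat] at hrev
  have hsup := congrArg SimpleGraph.Walk.support hrev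
  rw [SimpleGraph.Walk.support_cons, SimpleGraph.Walk.support_cons,
    p1.reverse.support_eq_cons, p2.reverse.support_eq_cons] at hsup
  simp only [List.cons.injEq] at hsup
  exact hsup.2.1

end TreeAux
section MuAux

variable {V : Type*}

/-- sum of the values of `d` on the two endpoints of an edge -/
def dsum (d : V → ℕ) : Sym2 V → ℕ :=
  Sym2.lift ⟨fun a b => d a + d b, fun a b => by dsimp; omega⟩

lemma dsum_mk (d : V → ℕ) (a b : V) : dsum d s(a, b) = d a + d b := rfl

open Classical in
noncomputable def mu (d : V → ℕ) (N : Set (Sym2 V)) : ℕ :=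
  if h : N.Finite then ∑ e ∈ h.toFinset, dsum d e else 0

lemma mu_insert (d : V → ℕ) {N : Set (Sym2 V)} (h : N.Finite) {g : Sym2 V} (hg : g ∉ N) :
    mu d (insert g N) = dsum d g + mu d N := by
  classical
  rw [mu, dif_pos (h.insert g), mu, dif_pos h]
  have hts : (h.insert g).toFinset = insert g h.toFinset := by
    ext e; simp
  rw [hts, Finset.sum_insert (by simp [hg])]

lemma mu_remove (d : V → ℕ) {N : Set (Sym2 V)} (h : N.Finite) {f : Sym2 V} (hf : f ∈ N) :
    mu d N = dsum d f + mu d (N \ {f}) := by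
  have hset : insert f (N \ {f}) = N := by
    rw [Set.insert_diff_singleton]
    exact Set.insert_eq_self.mpr hf
  conv_lhs => rw [← hset]
  exact mu_insert d h.diff (by simp)

end MuAux
section EvAux

variable {V : Type*} [Fintype V] {G : SimpleGraph V}

lemma edge_rep {e : Sym2 V} (he : e ∈ G.edgeSet) {v : V} (hv : v ∈ e) :
    ∃ u, G.Adj v u ∧ e = s(v, u) := by
  induction e with
  | _ a b =>
    rcases Sym2.mem_iff.mp hv with rfl | rfl
    · exact ⟨b, G.mem_edgeSet.mp he, rfl⟩
    · exact ⟨a, (G.mem_edgeSet.mp he).symm, Sym2.eq_swap⟩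

lemma sym2_ne_of_ne {v u w : V} (h : u ≠ w) : s(v, u) ≠ s(v, w) :=
  fun hh => h (Sym2.congr_right.mp hh)

/-- removal of an edge whose coverage is otherwise ensured -/
lemma remove_edge_evdom {N : Set (Sym2 V)} (hN : IsEvDomSet G N) {f : Sym2 V} 
    (hcov : ∀ z, EvDom G f z → ∃ e ∈ N \ {f}, EvDom G e z) : IsEvDomSet G (N \ {f}) := by
  refine ⟨(Set.diff_subset).trans hN.1, fun z => ?_⟩
  obtain ⟨e, heN, hez⟩ := hN.2 z
  rcases eq_or_ne e f with rfl | hne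
  · exact hcov z hez
  · exact ⟨e, ⟨heN, hne⟩, hez⟩

lemma not_evdom_smaller {N : Set (Sym2 V)} (hN : IsMinEvDomSet G N) {f : Sym2 V} (hf : f ∈ N)
    (h : IsEvDomSet G (N \ {f})) : False := by
  have h1 := hN.2 _ h
  have h2 : (N \ {f}).ncard = N.ncard - 1 := Set.ncard_diff_singleton_of_mem hf
  have h3 : 0 < N.ncard := (Set.ncard_pos (Set.toFinite N)).mpr ⟨f, hf⟩
  omega

/-- the push lemma: replace s(v,c) by an edge hanging at c, keeping ev-domination,
    provided v is in another edge s(a,v) of N. -/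
lemma push_evdom {N : Set (Sym2 V)} (hN : IsEvDomSet G N) {a v c x : V}
    (he : s(a, v) ∈ N) (hf : s(v, c) ∈ N) (hef : s(a, v) ≠ s(v, c)) (hcx : G.Adj c x) :
    IsEvDomSet G (insert s(c, x) (N \ {s(v, c)})) := by
  constructor
  · exact Set.insert_subset (G.mem_edgeSet.mpr hcx) ((Set.diff_subset).trans hN.1)
  · intro z
    obtain ⟨e, heN, hez⟩ := hN.2 z
    rcases eq_or_ne e s(v, c) with rfl | hne
    · have hmem_e : s(a, v) ∈ insert s(c, x) (N \ {s(v, c)}) := Set.mem_insert_iff.mpr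
        (Or.inr ⟨he, hef⟩)
      have hmem_n : s(c, x) ∈ insert s(c, x) (N \ {s(v, c)}) := Set.mem_insert _ _
      rcases hez with hz | ⟨q, hq, hqz⟩
      · rcases Sym2.mem_iff.mp hz with rfl | rfl
        · exact ⟨s(a, z), hmem_e, Or.inl (Sym2.mem_mk_right a z)⟩
        · exact ⟨s(z, x), hmem_n, Or.inl (Sym2.mem_mk_left z x)⟩
      · rcases Sym2.mem_iff.mp hq with rfl | rfl
        · exact ⟨s(a, q), hmem_e, Or.inr ⟨q, Sym2.mem_mk_right a q, hqz⟩⟩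
        · exact ⟨s(q, x), hmem_n, Or.inr ⟨q, Sym2.mem_mk_left q x, hqz⟩⟩
    · exact ⟨e, Set.mem_insert_iff.mpr (Or.inr ⟨heN, hne⟩), hez⟩

lemma min_push {N : Set (Sym2 V)} (hN : IsMinEvDomSet G N) {a v c x : V}
    (he : s(a, v) ∈ N) (hf : s(v, c) ∈ N) (hef : s(a, v) ≠ s(v, c)) (hcx : G.Adj c x)
    (hxv : x ≠ v) :
    s(c, x) ∉ N ∧ IsMinEvDomSet G (insert s(c, x) (N \ {s(v, c)})) ∧
      (insert s(c, x) (N \ {s(v, c)})).ncard = N.ncard := by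
  have hvc : v ≠ c := (G.mem_edgeSet.mp (hN.1.1 hf)).ne
  have hnew_ne : s(c, x) ≠ s(v, c) := by
    intro hh
    rcases Sym2.eq_iff.mp hh with ⟨h1, h2⟩ | ⟨h1, h2⟩
    · exact hvc h1.symm
    · exact hxv h2
  have hev := push_evdom hN.1 he hf hef hcx
  have hnotin : s(c, x) ∉ N := by
    intro hmem
    have : insert s(c, x) (N \ {s(v, c)}) = N \ {s(v, c)} :=
      Set.insert_eq_self.mpr ⟨hmem, hnew_ne⟩
    exact not_evdom_smaller hN hf (this ▸ hev)
  have hcard : (insert s(c, x) (N \ {s(v, c)})).ncard = N.ncard := by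
    rw [Set.ncard_insert_of_notMem (fun hh => hnotin hh.1) (Set.toFinite N).diff,
      Set.ncard_diff_singleton_of_mem hf]
    have : 0 < N.ncard := (Set.ncard_pos (Set.toFinite N)).mpr ⟨_, hf⟩
    omega
  exact ⟨hnotin, ⟨hev, fun M' hM' => hcard ▸ hN.2 M' hM'⟩, hcard⟩

end EvAux
section CountAux

variable {V : Type*} [Fintype V] {G : SimpleGraph V}

lemma edgeVerts_empty : edgeVerts (∅ : Set (Sym2 V)) = ∅ := by
  ext v; simp [edgeVerts]

lemma edgeVerts_insert (e : Sym2 V) (N : Set (Sym2 V)) :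
    edgeVerts (insert e N) = {v | v ∈ e} ∪ edgeVerts N := by
  ext v
  simp only [edgeVerts, Set.mem_setOf_eq, Set.mem_insert_iff, Set.mem_union]
  constructor
  · rintro ⟨f, rfl | hf, hv⟩
    · exact Or.inl hv
    · exact Or.inr ⟨f, hf, hv⟩
  · rintro (hv | ⟨f, hf, hv⟩)
    · exact ⟨e, Or.inl rfl, hv⟩
    · exact ⟨f, Or.inr hf, hv⟩

lemma ncard_edgeVerts : ∀ N : Set (Sym2 V), N ⊆ G.edgeSet → NoSharedVertex N →
    (edgeVerts N).ncard = 2 * N.ncard := by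
  intro N
  refine Set.Finite.induction_on
    (motive := fun N _ => N ⊆ G.edgeSet → NoSharedVertex N →
      (edgeVerts N).ncard = 2 * N.ncard) N (Set.toFinite N) ?_ ?_
  · intro _ _; simp [edgeVerts_empty]
  · intro e N henotin _ ih hsub hsh
    have hsub' : N ⊆ G.edgeSet := fun f hf => hsub (Set.mem_insert_iff.mpr (Or.inr hf))
    have hsh' : NoSharedVertex N := fun f hf g hg hne v hv =>
      hsh f (Or.inr hf) g (Or.inr hg) hne v hv
    have heG : e ∈ G.edgeSet := hsub (Set.mem_insert _ _)
    obtain ⟨a, b, rfl⟩ : ∃ a b, e = s(a, b) := by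
      induction e with | _ a b => exact ⟨a, b, rfl⟩
    have hab : a ≠ b := (G.mem_edgeSet.mp heG).ne
    have hset : edgeVerts (insert s(a,b) N) = insert a (insert b (edgeVerts N)) := by
      rw [edgeVerts_insert]
      ext v
      simp only [Set.mem_union, Set.mem_setOf_eq, Sym2.mem_iff, Set.mem_insert_iff]
      tauto
    have hanotin : ∀ v, v ∈ s(a,b) → v ∉ edgeVerts N := by
      intro v hv ⟨g, hg, hvg⟩
      exact hsh s(a,b) (Set.mem_insert _ _) g (Or.inr hg)
        (fun hh => henotin (hh ▸ hg)) v hv hvg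
    rw [hset, Set.ncard_insert_of_notMem, Set.ncard_insert_of_notMem, ih hsub' hsh',
      Set.ncard_insert_of_notMem henotin]
    · ring
    · exact hanotin b (Sym2.mem_mk_right a b)
    · intro hmem
      rcases hmem with rfl | hmem
      · exact hab rfl
      · exact hanotin a (Sym2.mem_mk_left a b) hmem

end CountAux

section PMAux

variable {V : Type*} [Fintype V] {G : SimpleGraph V}

lemma pm_noshared {D : Set V} {M : Set (Sym2 V)} (h : IsPMOn G D M) : NoSharedVertex M := by
  intro e he f hf hne v hve hvf
  have hvD : v ∈ D := h.2.1 e he v hve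
  obtain ⟨g, -, hg⟩ := h.2.2 v hvD
  exact hne ((hg e ⟨he, hve⟩).trans (hg f ⟨hf, hvf⟩).symm)

lemma pm_edgeVerts {D : Set V} {M : Set (Sym2 V)} (h : IsPMOn G D M) : edgeVerts M = D := by
  ext v
  constructor
  · rintro ⟨e, he, hv⟩; exact h.2.1 e he v hv
  · intro hv
    obtain ⟨e, ⟨he, hve⟩, -⟩ := h.2.2 v hv
    exact ⟨e, he, hve⟩

lemma pm_ncard {D : Set V} {M : Set (Sym2 V)} (h : IsPMOn G D M) : D.ncard = 2 * M.ncard := by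
  rw [← pm_edgeVerts h]
  exact ncard_edgeVerts M h.1 (pm_noshared h)

lemma pm_evdom {D : Set V} {M : Set (Sym2 V)} (hdom : IsDomSet G D) (h : IsPMOn G D M) :
    IsEvDomSet G M := by
  refine ⟨h.1, fun z => ?_⟩
  by_cases hz : z ∈ D
  · obtain ⟨e, ⟨he, hze⟩, -⟩ := h.2.2 z hz
    exact ⟨e, he, Or.inl hze⟩
  · obtain ⟨u, huD, huz⟩ := hdom z hz
    obtain ⟨e, ⟨he, hue⟩, -⟩ := h.2.2 u huD
    exact ⟨e, he, Or.inr ⟨u, hue, huz⟩⟩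

lemma pm_empty {M : Set (Sym2 V)} (h : IsPMOn G (∅ : Set V) M) : M = ∅ := by
  ext e
  simp only [Set.mem_empty_iff_false, iff_false]
  intro he
  have heG := h.1 he
  obtain ⟨a, b, rfl⟩ : ∃ a b, e = s(a, b) := by
    induction e with | _ a b => exact ⟨a, b, rfl⟩
  exact h.2.1 _ he a (Sym2.mem_mk_left a b)

/-- a finite forest-like set-up: there is a vertex of `D` with a unique `D`-neighbour -/
lemma exists_leaf (hT : G.IsTree) {D : Set V} (hne : D.Nonempty)
    (hnb : ∀ v ∈ D, ∃ u, u ∈ D ∧ G.Adj u v) :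
    ∃ b ∈ D, ∃ c, (c ∈ D ∧ G.Adj c b) ∧ ∀ c', c' ∈ D → G.Adj c' b → c' = c := by
  classical
  obtain ⟨a, -⟩ := id hne
  obtain ⟨b, hbD, hmax⟩ := Set.exists_max_image D (G.dist a) (Set.toFinite D) hne
  obtain ⟨c, hcD, hcb⟩ := hnb b hbD
  have hkey : ∀ c', c' ∈ D → G.Adj c' b → G.dist a c' + 1 = G.dist a b := by
    intro c' hc'D hc'b
    rcases adj_dist_cases hT a hc'b with h | h
    · omega
    · have := hmax c' hc'D; omega
  refine ⟨b, hbD, c, ⟨hcD, hcb⟩, fun c' hc'D hc'b => ?_⟩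
  exact parent_unique hT a hc'b hcb (hkey c' hc'D hc'b) (hkey c hcD hcb)

lemma pm_unique_aux (hT : G.IsTree) :
    ∀ n (D : Set V) (M1 M2 : Set (Sym2 V)), D.ncard ≤ n →
      IsPMOn G D M1 → IsPMOn G D M2 → M1 = M2 := by
  classical
  intro n
  induction n with
  | zero =>
    intro D M1 M2 hcard h1 h2
    have hD : D = ∅ := (Set.ncard_eq_zero (Set.toFinite D)).mp (Nat.le_zero.mp hcard)
    subst hD
    rw [pm_empty h1, pm_empty h2]
  | succ n ih =>
    intro D M1 M2 hcard h1 h2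
    rcases D.eq_empty_or_nonempty with rfl | hne
    · rw [pm_empty h1, pm_empty h2]
    · have hnb : ∀ v ∈ D, ∃ u, u ∈ D ∧ G.Adj u v := by
        intro v hv
        obtain ⟨e, ⟨he, hve⟩, -⟩ := h1.2.2 v hv
        obtain ⟨u, hadj, hrep⟩ := edge_rep (h1.1 he) hve
        exact ⟨u, h1.2.1 e he u (hrep ▸ Sym2.mem_mk_right v u), hadj.symm⟩
      obtain ⟨b, hbD, c, ⟨hcD, hcb⟩, hcuniq⟩ := exists_leaf hT hne hnb
      have hedge : ∀ M : Set (Sym2 V), IsPMOn G D M → s(b, c) ∈ M := by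
        intro M hM
        obtain ⟨e, ⟨he, hbe⟩, -⟩ := hM.2.2 b hbD
        obtain ⟨c1, hadj, hrep⟩ := edge_rep (hM.1 he) hbe
        have hc1D : c1 ∈ D := hM.2.1 e he c1 (hrep ▸ Sym2.mem_mk_right b c1)
        rw [hcuniq c1 hc1D hadj.symm] at hrep
        exact hrep ▸ he
      have h1bc := hedge M1 h1
      have h2bc := hedge M2 h2
      have hbc : b ≠ c := hcb.ne'
      set D' := D \ {b, c} with hD'
      have hstep : ∀ M : Set (Sym2 V), IsPMOn G D M → s(b, c) ∈ M →
          IsPMOn G D' (M \ {s(b, c)}) := by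
        intro M hM hbcM
        refine ⟨(Set.diff_subset).trans hM.1, ?_, ?_⟩
        · rintro e ⟨he, hne⟩ v hve
          have hvD : v ∈ D := hM.2.1 e he v hve
          refine ⟨hvD, ?_⟩
          rintro (rfl | rfl)
          · obtain ⟨g, -, hg⟩ := hM.2.2 v hvD
            exact hne (by rw [hg e ⟨he, hve⟩, hg s(v, c) ⟨hbcM, Sym2.mem_mk_left v c⟩]; rfl)
          · obtain ⟨g, -, hg⟩ := hM.2.2 v hvD
            exact hne (by rw [hg e ⟨he, hve⟩, hg s(b, v) ⟨hbcM, Sym2.mem_mk_right b v⟩]; rfl)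
        · rintro v ⟨hvD, hvnot⟩
          obtain ⟨e, ⟨he, hve⟩, heu⟩ := hM.2.2 v hvD
          have hvb : v ≠ b := fun hh => hvnot (Or.inl hh)
          have hvc : v ≠ c := fun hh => hvnot (Or.inr hh)
          have hebc : e ≠ s(b, c) := by
            intro hh
            rcases Sym2.mem_iff.mp (hh ▸ hve) with rfl | rfl
            · exact hvb rfl
            · exact hvc rfl
          refine ⟨e, ⟨⟨he, hebc⟩, hve⟩, ?_⟩
          rintro f ⟨⟨hf, -⟩, hvf⟩
          exact heu f ⟨hf, hvf⟩
      have hcard' : D'.ncard ≤ n := by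
        have h1' : D'.ncard < D.ncard := by
          apply Set.ncard_lt_ncard _ (Set.toFinite D)
          constructor
          · exact Set.diff_subset
          · intro hsub
            have := hsub hbD
            simp [hD'] at this
        omega
      have := ih D' (M1 \ {s(b, c)}) (M2 \ {s(b, c)}) hcard'
        (hstep M1 h1 h1bc) (hstep M2 h2 h2bc)
      have hiff := Set.ext_iff.mp this
      ext e
      rcases eq_or_ne e s(b, c) with rfl | hne
      · simp [h1bc, h2bc]
      · constructor
        · intro he
          exact ((hiff e).mp ⟨he, by simp [hne]⟩).1
        · intro he
          exact ((hiff e).mpr ⟨he, by simp [hne]⟩).1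

lemma pm_unique (hT : G.IsTree) {D : Set V} {M1 M2 : Set (Sym2 V)}
    (h1 : IsPMOn G D M1) (h2 : IsPMOn G D M2) : M1 = M2 :=
  pm_unique_aux hT D.ncard D M1 M2 le_rfl h1 h2

end PMAux
section StepAux

variable {V : Type*} [Fintype V] {G : SimpleGraph V}

lemma shared_config (hT : G.IsTree) (r : V) {N : Set (Sym2 V)} (hsub : N ⊆ G.edgeSet)
    (h : ¬ NoSharedVertex N) :
    ∃ v u w, G.Adj v u ∧ G.Adj v w ∧ u ≠ w ∧ G.dist r w = G.dist r v + 1 ∧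
      s(v, u) ∈ N ∧ s(v, w) ∈ N := by
  unfold NoSharedVertex at h
  push_neg at h
  obtain ⟨e, he, f, hf, hef, q, hqe, hqf⟩ := h
  obtain ⟨a, hqa, rfl⟩ := edge_rep (hsub he) hqe
  obtain ⟨b, hqb, rfl⟩ := edge_rep (hsub hf) hqf
  have hab : a ≠ b := fun hh => hef (by rw [hh])
  rcases adj_dist_cases hT r hqb with hb | hb
  · exact ⟨q, a, b, hqa, hqb, hab, hb, he, hf⟩
  · rcases adj_dist_cases hT r hqa with ha | ha
    · exact ⟨q, b, a, hqb, hqa, hab.symm, ha, hf, he⟩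
    · exact absurd (parent_unique hT r hqa.symm hqb.symm ha.symm hb.symm) hab

lemma push_step (hT : G.IsTree) (r : V) {N : Set (Sym2 V)} (hN : IsMinEvDomSet G N)
    {v u w : V} (hvu : G.Adj v u) (hvw : G.Adj v w) (huw : u ≠ w)
    (hw : G.dist r w = G.dist r v + 1) (he : s(v, u) ∈ N) (hf : s(v, w) ∈ N) :
    ∃ x, G.Adj w x ∧ x ≠ v ∧ G.dist r x = G.dist r w + 1 ∧ s(w, x) ∉ N ∧
      IsMinEvDomSet G (insert s(w, x) (N \ {s(v, w)})) ∧
      mu (G.dist r) (insert s(w, x) (N \ {s(v, w)})) = mu (G.dist r) N + 2 := by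
  have hef : s(v, u) ≠ s(v, w) := sym2_ne_of_ne huw
  by_cases hleaf : ∃ x, G.Adj w x ∧ x ≠ v
  · obtain ⟨x, hwx, hxv⟩ := hleaf
    have hx : G.dist r x = G.dist r w + 1 := by
      rcases adj_dist_cases hT r hwx with h | h
      · exact h
      · exact absurd (parent_unique hT r hwx.symm hvw h.symm hw.symm) hxv
    have he' : s(u, v) ∈ N := by rwa [Sym2.eq_swap]
    have hef' : s(u, v) ≠ s(v, w) := by rw [Sym2.eq_swap]; exact hef
    obtain ⟨hnotin, hmin, -⟩ := min_push hN he' hf hef' hwx hxv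
    refine ⟨x, hwx, hxv, hx, hnotin, hmin, ?_⟩
    have h1 : mu (G.dist r) (insert s(w, x) (N \ {s(v, w)})) =
        dsum (G.dist r) s(w, x) + mu (G.dist r) (N \ {s(v, w)}) :=
      mu_insert _ (Set.toFinite N).diff (fun hh => hnotin hh.1)
    have h2 : mu (G.dist r) N = dsum (G.dist r) s(v, w) + mu (G.dist r) (N \ {s(v, w)}) :=
      mu_remove _ (Set.toFinite N) hf
    rw [h1, h2, dsum_mk, dsum_mk]
    omega
  · push_neg at hleaf
    exfalso
    apply not_evdom_smaller hN hf
    apply remove_edge_evdom hN.1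
    intro z hz
    have hmem : s(v, u) ∈ N \ {s(v, w)} := ⟨he, by simp [hef]⟩
    rcases hz with hz | ⟨q, hq, hqz⟩
    · rcases Sym2.mem_iff.mp hz with rfl | rfl
      · exact ⟨s(z, u), hmem, Or.inl (Sym2.mem_mk_left z u)⟩
      · exact ⟨s(v, u), hmem, Or.inr ⟨v, Sym2.mem_mk_left v u, hvw⟩⟩
    · rcases Sym2.mem_iff.mp hq with rfl | rfl
      · exact ⟨s(q, u), hmem, Or.inr ⟨q, Sym2.mem_mk_left q u, hqz⟩⟩
      · rw [hleaf z hqz]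
        exact ⟨s(v, u), hmem, Or.inl (Sym2.mem_mk_left v u)⟩

end StepAux
theorem stmt9 [Fintype V] (G : SimpleGraph V) (hT : G.IsTree) (h2 : 2 ≤ Fintype.card V)
    (Dpr : Set V) (hD : IsMinPairedDomSet G Dpr)
    (huniq : ∀ D' : Set V, IsMinPairedDomSet G D' → D' = Dpr) :
    ∃ M : Set (Sym2 V), IsMinEvDomSet G M ∧
      (∀ M' : Set (Sym2 V), IsMinEvDomSet G M' → M' = M) ∧
      IsPMOn G Dpr M ∧ (∀ M' : Set (Sym2 V), IsPMOn G Dpr M' → M' = M) ∧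
      edgeVerts M = Dpr := by
  classical
  obtain ⟨r⟩ : Nonempty V := Fintype.card_pos_iff.mp (by omega)
  -- every vertex has a neighbour
  have hadj : ∀ v : V, ∃ u, G.Adj u v := by
    intro v
    obtain ⟨wv, hwv⟩ := Fintype.exists_ne_of_one_lt_card (by omega) v
    obtain ⟨p⟩ := hT.isConnected.preconnected v wv
    cases p with
    | nil => exact absurd rfl hwv
    | cons h q => exact ⟨_, h.symm⟩
  obtain ⟨⟨hdom, M0, hM0⟩, hDmin⟩ := hD
  have hM0ev : IsEvDomSet G M0 := pm_evdom hdom hM0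
  -- existence of a minimum ev-dom set
  have hexmin : ∃ N, IsMinEvDomSet G N := by
    have hne : {N : Set (Sym2 V) | IsEvDomSet G N}.Nonempty := by
      refine ⟨G.edgeSet, le_rfl, fun v => ?_⟩
      obtain ⟨u, hu⟩ := hadj v
      exact ⟨s(u, v), G.mem_edgeSet.mpr hu, Or.inl (Sym2.mem_mk_right u v)⟩
    obtain ⟨N, hN, hmin⟩ := Set.exists_min_image _ Set.ncard (Set.toFinite _) hne
    exact ⟨N, hN, fun M' hM' => hmin M' hM'⟩
  -- an unshared minimum ev-dom set is the perfect matching of Dpr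
  have hunsh : ∀ N, IsMinEvDomSet G N → NoSharedVertex N → edgeVerts N = Dpr ∧ N = M0 := by
    intro N hN hsh
    have hpmN : IsPMOn G (edgeVerts N) N := by
      refine ⟨hN.1.1, fun e he v hv => ⟨e, he, hv⟩, fun v hv => ?_⟩
      obtain ⟨e, heN, hve⟩ := hv
      refine ⟨e, ⟨heN, hve⟩, ?_⟩
      rintro f ⟨hfN, hvf⟩
      by_contra hne
      exact hsh f hfN e heN hne v hvf hve
    have hpair : IsPairedDomSet G (edgeVerts N) := by
      refine ⟨?_, N, hpmN⟩
      intro z hz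
      obtain ⟨e, heN, hez⟩ := hN.1.2 z
      rcases hez with hze | ⟨q, hq, hqz⟩
      · exact absurd ⟨e, heN, hze⟩ hz
      · exact ⟨q, ⟨e, heN, hq⟩, hqz⟩
    have hcard : (edgeVerts N).ncard = 2 * N.ncard := ncard_edgeVerts N hN.1.1 hsh
    have hDcard : Dpr.ncard = 2 * M0.ncard := pm_ncard hM0
    have h1 : N.ncard ≤ M0.ncard := hN.2 M0 hM0ev
    have h2 : Dpr.ncard ≤ (edgeVerts N).ncard := hDmin _ hpair
    have h3 : (edgeVerts N).ncard = Dpr.ncard := by omega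
    have hmin' : IsMinPairedDomSet G (edgeVerts N) :=
      ⟨hpair, fun D'' h'' => h3 ▸ hDmin D'' h''⟩
    have hEq := huniq _ hmin'
    exact ⟨hEq, pm_unique hT (hEq ▸ hpmN) hM0⟩
  -- existence of an unshared minimum ev-dom set
  have hex_unsh : ∃ N, IsMinEvDomSet G N ∧ NoSharedVertex N := by
    obtain ⟨N0, hN0⟩ := hexmin
    obtain ⟨N, hNS, hmax⟩ := Set.exists_max_image {N : Set (Sym2 V) | IsMinEvDomSet G N}
      (mu (G.dist r)) (Set.toFinite _) ⟨N0, hN0⟩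
    refine ⟨N, hNS, ?_⟩
    by_contra hsh
    obtain ⟨v, u, w, hvu, hvw, huw, hw, he, hf⟩ := shared_config hT r hNS.1.1 hsh
    obtain ⟨x, -, -, -, -, hmin, hmu⟩ := push_step hT r hNS hvu hvw huw hw he hf
    have := hmax _ hmin
    omega
  obtain ⟨Nstar, hNstar, hNstar_sh⟩ := hex_unsh
  have hM0min : IsMinEvDomSet G M0 := (hunsh Nstar hNstar hNstar_sh).2 ▸ hNstar
  -- ⋆: every minimum ev-dominating set is unshared
  have hstar : ∀ N, IsMinEvDomSet G N → NoSharedVertex N := by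
    by_contra hbad
    push_neg at hbad
    set S := {N : Set (Sym2 V) | IsMinEvDomSet G N ∧ ¬ NoSharedVertex N} with hS_def
    have hSne : S.Nonempty := by
      obtain ⟨N, h1, h2⟩ := hbad; exact ⟨N, h1, h2⟩
    obtain ⟨N, hNS, hmax⟩ := Set.exists_max_image S (mu (G.dist r)) (Set.toFinite S) hSne
    obtain ⟨hNmin, hNsh⟩ := hNS
    have hpush_unsh : ∀ N', IsMinEvDomSet G N' → mu (G.dist r) N' ≥ mu (G.dist r) N + 1 → NoSharedVertex N' := by
      intro N' h1 h2
      by_contra h3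
      have := hmax N' ⟨h1, h3⟩
      omega
    obtain ⟨v, u, w, hvu, hvw, huw, hw, he, hf⟩ := shared_config hT r hNmin.1.1 hNsh
    obtain ⟨x, hwx, hxv, hx, hwxN, hNxmin, hNxmu⟩ := push_step hT r hNmin hvu hvw huw hw he hf
    set Nx := insert s(w, x) (N \ {s(v, w)}) with hNx_def
    have hNxsh : NoSharedVertex Nx := hpush_unsh _ hNxmin (by omega)
    have hNxM0 : Nx = M0 := (hunsh _ hNxmin hNxsh).2
    have hef : s(v, u) ≠ s(v, w) := sym2_ne_of_ne huw
    have hfe : s(v, w) ≠ s(v, u) := hef.symm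
    have heNx : s(v, u) ∈ Nx := Set.mem_insert_iff.mpr (Or.inr ⟨he, by simp [hef]⟩)
    have heM0 : s(v, u) ∈ M0 := hNxM0 ▸ heNx
    have hfM0 : s(v, w) ∉ M0 := by
      rw [← hNxM0]
      rintro (hh | ⟨-, hh⟩)
      · rcases Sym2.eq_iff.mp hh with ⟨h1, -⟩ | ⟨h1, -⟩
        · exact hvw.ne h1
        · exact hxv h1.symm
      · exact hh rfl
    have hu_only : ∀ g ∈ N, u ∈ g → g = s(v, u) := by
      intro g hg hug
      by_contra hgne
      have hgf : g ≠ s(v, w) := by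
        rintro rfl
        rcases Sym2.mem_iff.mp hug with rfl | rfl
        · exact hvu.ne' rfl
        · exact huw rfl
      have hgNx : g ∈ Nx := Set.mem_insert_iff.mpr (Or.inr ⟨hg, by simp [hgf]⟩)
      exact hNxsh g hgNx s(v, u) heNx hgne u hug (Sym2.mem_mk_right v u)
    have hshare_pair : ∀ g ∈ N, ∀ h' ∈ N, g ≠ h' → ∀ q, q ∈ g → q ∈ h' →
        (g = s(v, u) ∨ g = s(v, w)) := by
      intro g hg h' hh' hne q hqg hqh
      by_contra hcon
      push_neg at hcon
      have hgNx : g ∈ Nx := Set.mem_insert_iff.mpr (Or.inr ⟨hg, by simp [hcon.2]⟩)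
      by_cases hh'f : h' = s(v, w)
      · subst hh'f
        rcases Sym2.mem_iff.mp hqh with rfl | rfl
        · exact hNxsh g hgNx s(q, u) heNx hcon.1 q hqg (Sym2.mem_mk_left q u)
        · have hwxNx : s(q, x) ∈ Nx := Set.mem_insert _ _
          have hgne' : g ≠ s(q, x) := by
            rintro rfl; exact hwxN hg
          exact hNxsh g hgNx s(q, x) hwxNx hgne' q hqg (Sym2.mem_mk_left q x)
      · have hh'Nx : h' ∈ Nx := Set.mem_insert_iff.mpr (Or.inr ⟨hh', by simp [hh'f]⟩)
        exact hNxsh g hgNx h' hh'Nx hne q hqg hqh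
    -- case analysis on the other endpoint u
    rcases adj_dist_cases hT r hvu with hu | hu
    · -- u is also a child of v : push the other side
      obtain ⟨y, huy, hyv, hy, huyN, hNymin, hNymu⟩ :=
        push_step hT r hNmin hvw hvu huw.symm hu hf he
      have hNysh : NoSharedVertex _ := hpush_unsh _ hNymin (by omega)
      have hNyM0 := (hunsh _ hNymin hNysh).2
      rw [← hNyM0] at heM0
      rcases Set.mem_insert_iff.mp heM0 with hh | ⟨-, hh⟩
      · rcases Sym2.eq_iff.mp hh with ⟨h1, -⟩ | ⟨h1, -⟩
        · exact hvu.ne h1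
        · exact hyv h1.symm
      · exact hh rfl
    · -- u is the parent of v
      have hu_nonleaf : ∃ y, G.Adj u y ∧ y ≠ v := by
        by_contra hcon
        push_neg at hcon
        apply not_evdom_smaller hNmin he
        apply remove_edge_evdom hNmin.1
        intro z hz
        have hfmem : s(v, w) ∈ N \ {s(v, u)} := ⟨hf, by simp [hfe]⟩
        rcases hz with hz | ⟨q, hq, hqz⟩
        · rcases Sym2.mem_iff.mp hz with rfl | rfl
          · exact ⟨s(z, w), hfmem, Or.inl (Sym2.mem_mk_left z w)⟩
          · exact ⟨s(v, w), hfmem, Or.inr ⟨v, Sym2.mem_mk_left v w, hvu⟩⟩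
        · rcases Sym2.mem_iff.mp hq with rfl | rfl
          · exact ⟨s(q, w), hfmem, Or.inr ⟨q, Sym2.mem_mk_left q w, hqz⟩⟩
          · rw [hcon z hqz]
            exact ⟨s(v, w), hfmem, Or.inl (Sym2.mem_mk_left v w)⟩
      by_cases hchild : ∃ y, G.Adj u y ∧ y ≠ v ∧ G.dist r y = G.dist r u + 1
      · -- sub-case : u has a child y ≠ v
        obtain ⟨y, huy, hyv, hy⟩ := hchild
        have he' : s(w, v) ∈ N := by rwa [Sym2.eq_swap]
        have hef2 : s(w, v) ≠ s(v, u) := by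
          rw [Sym2.eq_swap]; exact fun hh => hef hh.symm
        have hsuyN : s(u, y) ∉ N := by
          intro hmem
          have := hu_only _ hmem (Sym2.mem_mk_left u y)
          rcases Sym2.eq_iff.mp this with ⟨h1, -⟩ | ⟨-, h1⟩
          · exact hvu.ne' h1
          · exact hyv h1
        obtain ⟨-, hNymin, -⟩ := min_push hNmin he' he hef2 huy hyv
        set Ny := insert s(u, y) (N \ {s(v, u)}) with hNy_def
        have hmuNy : mu (G.dist r) Ny = mu (G.dist r) N := by
          have h1 : mu (G.dist r) Ny = dsum (G.dist r) s(u, y) + mu (G.dist r) (N \ {s(v, u)}) :=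
            mu_insert _ (Set.toFinite N).diff (fun hh => hsuyN hh.1)
          have h2 : mu (G.dist r) N = dsum (G.dist r) s(v, u) + mu (G.dist r) (N \ {s(v, u)}) :=
            mu_remove _ (Set.toFinite N) he
          rw [h1, h2, dsum_mk, dsum_mk]
          omega
        have hfNy : s(v, w) ∈ Ny :=
          Set.mem_insert_iff.mpr (Or.inr ⟨hf, by simp [hfe]⟩)
        by_cases hNysh : NoSharedVertex Ny
        · have hNyM0 := (hunsh _ hNymin hNysh).2
          rw [hNyM0] at hfNy
          exact hfM0 hfNy
        · -- Ny is still shared, of maximal weight : push it once more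
          obtain ⟨v2, u2, w2, hvu2, hvw2, huw2, hw2, he2, hf2⟩ :=
            shared_config hT r hNymin.1.1 hNysh
          obtain ⟨x2, hwx2, hxv2, hx2, hwxN2, hN2min, hN2mu⟩ :=
            push_step hT r hNymin hvu2 hvw2 huw2 hw2 he2 hf2
          have hN2sh : NoSharedVertex _ := hpush_unsh _ hN2min (by omega)
          have hN2M0 := (hunsh _ hN2min hN2sh).2
          rw [← hN2M0] at heM0
          have heNy_not : s(v, u) ∉ Ny := by
            rintro (hh | ⟨-, hh⟩)
            · rcases Sym2.eq_iff.mp hh with ⟨h1, -⟩ | ⟨h1, -⟩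
              · exact hvu.ne h1
              · exact hyv h1.symm
            · exact hh rfl
          rcases Set.mem_insert_iff.mp heM0 with hh | ⟨hh, -⟩
          · -- s(v,u) = s(w2,x2)
            rcases Sym2.eq_iff.mp hh with ⟨h1, h2⟩ | ⟨h1, h2⟩
            · -- v = w2, u = x2 : dist contradiction
              subst h1; subst h2
              omega
            · -- v = x2, u = w2
              subst h1; subst h2
              -- the edge s(v2, u) lies in Ny and contains u
              have hf2Ny : s(v2, u) ∈ Ny := hf2
              rcases Set.mem_insert_iff.mp hf2Ny with hh2 | ⟨hh2, hh3⟩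
              · -- s(v2,u) = s(u,y) : v2 = y, dist contradiction
                rcases Sym2.eq_iff.mp hh2 with ⟨h3, h4⟩ | ⟨h3, h4⟩
                · exact absurd h4 huy.ne
                · subst h3; omega
              · have := hu_only _ hh2 (Sym2.mem_mk_right v2 u)
                exact absurd this (by simpa using hh3)
          · exact heNy_not hh
      · -- sub-case : all neighbours of u other than v are parents; unique parent p
        push_neg at hchild
        obtain ⟨p, hup, hpv⟩ := hu_nonleaf
        have hp : G.dist r u = G.dist r p + 1 := by
          rcases adj_dist_cases hT r hup with h | h
          · exact absurd h (hchild p hup hpv)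
          · exact h
        have huniq_nb : ∀ z, G.Adj u z → z = v ∨ z = p := by
          intro z huz
          by_cases hzv : z = v
          · exact Or.inl hzv
          · right
            have hz : G.dist r u = G.dist r z + 1 := by
              rcases adj_dist_cases hT r huz with h | h
              · exact absurd h (hchild z huz hzv)
              · exact h
            exact parent_unique hT r huz.symm hup.symm hz.symm hp.symm
        by_cases hpedge : ∃ g ∈ N, g ≠ s(v, u) ∧ p ∈ g
        · obtain ⟨g, hgN, hge, hpg⟩ := hpedge
          apply not_evdom_smaller hNmin he
          apply remove_edge_evdom hNmin.1
          intro z hz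
          have hfmem : s(v, w) ∈ N \ {s(v, u)} := ⟨hf, by simp [hfe]⟩
          have hgmem : g ∈ N \ {s(v, u)} := ⟨hgN, by simp [hge]⟩
          rcases hz with hz | ⟨q, hq, hqz⟩
          · rcases Sym2.mem_iff.mp hz with rfl | rfl
            · exact ⟨s(z, w), hfmem, Or.inl (Sym2.mem_mk_left z w)⟩
            · exact ⟨s(v, w), hfmem, Or.inr ⟨v, Sym2.mem_mk_left v w, hvu⟩⟩
          · rcases Sym2.mem_iff.mp hq with rfl | rfl
            · exact ⟨s(q, w), hfmem, Or.inr ⟨q, Sym2.mem_mk_left q w, hqz⟩⟩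
            · rcases huniq_nb z hqz with rfl | rfl
              · exact ⟨s(z, w), hfmem, Or.inl (Sym2.mem_mk_left z w)⟩
              · exact ⟨g, hgmem, Or.inl hpg⟩
        · push_neg at hpedge
          have he' : s(w, v) ∈ N := by rwa [Sym2.eq_swap]
          have hef2 : s(w, v) ≠ s(v, u) := by
            rw [Sym2.eq_swap]; exact fun hh => hef hh.symm
          obtain ⟨hupN, hN2min, -⟩ := min_push hNmin he' he hef2 hup hpv
          set N2 := insert s(u, p) (N \ {s(v, u)}) with hN2_def
          have hN2sh : NoSharedVertex N2 := by
            intro g hg h' hh' hgh q hqg hqh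
            rcases Set.mem_insert_iff.mp hg with rfl | hgN
            · rcases Set.mem_insert_iff.mp hh' with rfl | hh'N
              · exact hgh rfl
              · rcases Sym2.mem_iff.mp hqg with rfl | rfl
                · exact hh'N.2 (by simp [hu_only h' hh'N.1 hqh])
                · exact hpedge h' hh'N.1 (by simpa using hh'N.2) hqh
            · rcases Set.mem_insert_iff.mp hh' with rfl | hh'N
              · rcases Sym2.mem_iff.mp hqh with rfl | rfl
                · exact hgN.2 (by simp [hu_only g hgN.1 hqg])
                · exact hpedge g hgN.1 (by simpa using hgN.2) hqg
              · -- both in N \ {e}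
                have hg1 := hshare_pair g hgN.1 h' hh'N.1 hgh q hqg hqh
                have hh1 := hshare_pair h' hh'N.1 g hgN.1 (Ne.symm hgh) q hqh hqg
                have hgf : g = s(v, w) := by
                  rcases hg1 with h | h
                  · exact absurd h (by simpa using hgN.2)
                  · exact h
                have hh'f : h' = s(v, w) := by
                  rcases hh1 with h | h
                  · exact absurd h (by simpa using hh'N.2)
                  · exact h
                exact hgh (hgf.trans hh'f.symm)
          have hN2M0 := (hunsh _ hN2min hN2sh).2
          have hfN2 : s(v, w) ∈ N2 :=
            Set.mem_insert_iff.mpr (Or.inr ⟨hf, by simp [hfe]⟩)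
          rw [hN2M0] at hfN2
          exact hfM0 hfN2
  -- conclusion
  refine ⟨M0, hM0min, ?_, hM0, ?_, pm_edgeVerts hM0⟩
  · intro M' hM'
    exact (hunsh M' hM' (hstar M' hM')).2
  · intro M' hM'
    exact pm_unique hT hM' hM0
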